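/- arXiv:2602.15713 — 2 statements merged into one kernel-verified Lean document; each statement's English description precedes it below -/
import Mathlib

section
/- Let u be a nonconstant inner function and let φ ∈ L∞(𝕋) be such that the dual truncated Toeplitz operator D_φ on K_u^⊥ is normal and the essential range ess ran(φ) is a convex subset of ℂ. Then m(D_φ) = ess inf_{ζ ∈ 𝕋} |φ(ζ)|. -/
open MeasureTheory Complex
open scoped InnerProductSpace ENNReal

noncomputable section

namespace DTTO

instance fact2pi : Fact (0 < 2 * Real.pi) := ⟨by positivity⟩

/-- The circle, realized as `ℝ / 2πℤ`. -/
abbrev 𝕋c := AddCircle (2 * Real.pi)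

/-- Normalized Haar (Lebesgue) measure on the circle. -/
abbrev μT : Measure 𝕋c := AddCircle.haarAddCircle

/-- `L²(𝕋)`. -/
abbrev L2 := Lp ℂ 2 μT

/-- `L∞(𝕋)`. -/
abbrev Linf := Lp ℂ ⊤ μT

lemma memL2_smul (φ : Linf) (f : L2) : MemLp (⇑φ • ⇑f) 2 μT :=
  (Lp.memLp f).smul (Lp.memLp φ)

/-- Multiplication operator `M_φ : L² → L²` by a function `φ ∈ L∞`. -/
def Mmul (φ : Linf) : L2 →L[ℂ] L2 :=
  LinearMap.mkContinuous
    { toFun := fun f => (memL2_smul φ f).toLp _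
      map_add' := fun f g => by
        refine Lp.ext ?_
        filter_upwards [MemLp.coeFn_toLp (memL2_smul φ (f + g)),
          MemLp.coeFn_toLp (memL2_smul φ f), MemLp.coeFn_toLp (memL2_smul φ g),
          Lp.coeFn_add f g,
          Lp.coeFn_add ((memL2_smul φ f).toLp _) ((memL2_smul φ g).toLp _)] with
            x h1 h2 h3 h4 h5
        rw [h1, h5]
        simp only [Pi.add_apply, h2, h3]
        simp only [Pi.smul_apply', h4, Pi.add_apply, smul_add]
      map_smul' := fun c f => by
        refine Lp.ext ?_
        filter_upwards [MemLp.coeFn_toLp (memL2_smul φ (c • f)),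
          MemLp.coeFn_toLp (memL2_smul φ f),
          Lp.coeFn_smul c f,
          Lp.coeFn_smul c ((memL2_smul φ f).toLp _)] with x h1 h2 h3 h4
        rw [h1, RingHom.id_apply, h4]
        simp only [Pi.smul_apply, Pi.smul_apply', h2, h3]
        exact smul_comm _ _ _ }
    ‖φ‖ (fun f => by
      simp only [LinearMap.coe_mk, AddHom.coe_mk]
      rw [Lp.norm_toLp, Lp.norm_def, Lp.norm_def]
      rw [← ENNReal.toReal_mul]
      refine ENNReal.toReal_mono ?_ ?_
      · exact ENNReal.mul_ne_top (Lp.eLpNorm_ne_top φ) (Lp.eLpNorm_ne_top f)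
      · exact eLpNorm_smul_le_eLpNorm_top_mul_eLpNorm 2 (Lp.aestronglyMeasurable f) ⇑φ)

/-- The canonical inclusion `L∞ ⊆ L²` (the measure is finite). -/
def toL2 (φ : Linf) : L2 := ((Lp.memLp φ).mono_exponent le_top).toLp _

/-- The Hardy space `H²`, the closed linear span in `L²` of the exponentials `e_n`, `n ≥ 0`. -/
def H2 : Submodule ℂ L2 :=
  (Submodule.span ℂ (Set.range fun n : ℕ => (fourierLp 2 (n : ℤ) : L2))).topologicalClosure

instance : CompleteSpace H2 := (Submodule.isClosed_topologicalClosure _).completeSpace_coe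

/-- `H²₋ = L² ⊖ H²`. -/
def Hminus : Submodule ℂ L2 := H2ᗮ

instance : CompleteSpace Hminus := (Submodule.isClosed_orthogonal _).completeSpace_coe

/-- `H∞ = H² ∩ L∞`. -/
def MemHinf (φ : Linf) : Prop := toL2 φ ∈ H2

/-- An inner function: an element of `H² ∩ L∞` of modulus one a.e. -/
structure IsInnerFn (u : Linf) : Prop where
  memH2 : MemHinf u
  unimod : ∀ᵐ z ∂μT, ‖u z‖ = 1

/-- `u` is nonconstant (not a.e. equal to a constant). -/
def Nonconst (u : Linf) : Prop := ¬ ∃ c : ℂ, (⇑u : 𝕋c → ℂ) =ᵐ[μT] fun _ => c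

/-- The subspace `uH²` of `L²`. -/
def uH2 (u : Linf) : Submodule ℂ L2 := H2.map (Mmul u).toLinearMap

/-- The model space `K_u = H² ⊖ uH² = H² ∩ (uH²)ᗮ`. -/
def Ku (u : Linf) : Submodule ℂ L2 := H2 ⊓ (uH2 u)ᗮ

lemma isClosed_Ku (u : Linf) : IsClosed ((Ku u : Set L2)) := by
  have h : (Ku u : Set L2) = (H2 : Set L2) ∩ ((uH2 u)ᗮ : Set L2) := rfl
  rw [h]
  exact (Submodule.isClosed_topologicalClosure _).inter (Submodule.isClosed_orthogonal _)

instance (u : Linf) : CompleteSpace (Ku u) := (isClosed_Ku u).completeSpace_coe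

/-- `K_u^⊥ = L² ⊖ K_u`. -/
def KuP (u : Linf) : Submodule ℂ L2 := (Ku u)ᗮ

instance (u : Linf) : CompleteSpace (KuP u) := (Submodule.isClosed_orthogonal _).completeSpace_coe

/-- Dual truncated Toeplitz operator `D_φ` on `K_u^⊥`. -/
def Dop (u φ : Linf) : KuP u →L[ℂ] KuP u :=
  Submodule.orthogonalProjectionOnto (KuP u) ∘L Mmul φ ∘L (KuP u).subtypeL

/-- Truncated Toeplitz operator `A_φ` on `K_u`. -/
def Aop (u φ : Linf) : Ku u →L[ℂ] Ku u :=
  Submodule.orthogonalProjectionOnto (Ku u) ∘L Mmul φ ∘L (Ku u).subtypeL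

/-- The operator `B_φ : K_u → K_u^⊥`, `B_φ f = (I - P_{K_u})(φ f)`. -/
def Bop (u φ : Linf) : Ku u →L[ℂ] KuP u :=
  Submodule.orthogonalProjectionOnto (KuP u) ∘L Mmul φ ∘L (Ku u).subtypeL

/-- Toeplitz operator `T_φ : H² → H²`. -/
def Top (φ : Linf) : H2 →L[ℂ] H2 :=
  Submodule.orthogonalProjectionOnto H2 ∘L Mmul φ ∘L H2.subtypeL

/-- Hankel operator `H_φ : H² → H²₋`. -/
def Hop (φ : Linf) : H2 →L[ℂ] Hminus :=
  Submodule.orthogonalProjectionOnto Hminus ∘L Mmul φ ∘L H2.subtypeL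

/-- The exponential `e₁(ζ) = ζ` as an element of `L∞`. -/
def e1 : Linf := fourierLp ⊤ 1

/-- The exponential `e₋₁(ζ) = ζ̄` as an element of `L∞`. -/
def eneg1 : Linf := fourierLp ⊤ (-1)

/-- The operator `Q : H²₋ → H²₋`, `Q g = P₋(e₁ g)`. -/
def Qop : Hminus →L[ℂ] Hminus :=
  Submodule.orthogonalProjectionOnto Hminus ∘L Mmul e1 ∘L Hminus.subtypeL

/-- `u(0)`, the 0-th Fourier coefficient. -/
def coef0 (u : Linf) : ℂ := fourierCoeff (⇑u) 0

/-- Minimum modulus of a bounded operator. -/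
def minMod {E F : Type*} [NormedAddCommGroup E] [NormedSpace ℂ E]
    [NormedAddCommGroup F] [NormedSpace ℂ F] (T : E →L[ℂ] F) : ℝ :=
  ⨅ x : {x : E // ‖x‖ = 1}, ‖T x.1‖

/-- Complex conjugation on `L∞`. -/
lemma memLinf_star (φ : Linf) : MemLp (fun z => (starRingEnd ℂ) (φ z)) ⊤ μT := by
  refine ⟨continuous_star.comp_aestronglyMeasurable (Lp.aestronglyMeasurable φ), ?_⟩
  rw [eLpNorm_congr_norm_ae (g := ⇑φ) (Filter.Eventually.of_forall fun z => norm_star _)]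
  exact Lp.eLpNorm_lt_top φ

/-- The complex conjugate `φ̄ ∈ L∞` of `φ ∈ L∞`. -/
def conjL (φ : Linf) : Linf := (memLinf_star φ).toLp _

lemma memLinf_mul (φ ψ : Linf) : MemLp (⇑φ • ⇑ψ) ⊤ μT :=
  (Lp.memLp ψ).smul (Lp.memLp φ)

/-- The pointwise product of two elements of `L∞`. -/
def mulL (φ ψ : Linf) : Linf := (memLinf_mul φ ψ).toLp _

end DTTO

namespace DTTO

lemma inner_fourierLp_eq_zero {m n : ℤ} (h : m ≠ n) :
    (inner ℂ (fourierLp 2 m : L2) (fourierLp 2 n : L2) : ℂ) = 0 := by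
  have hcoe := congrFun (coe_fourierBasis (T := 2 * Real.pi))
  have h2 := (fourierBasis (T := 2 * Real.pi)).orthonormal.2 (i := m) (j := n) h
  simpa only [hcoe] using h2

lemma span_le_orth_em1 :
    Submodule.span ℂ (Set.range fun n : ℕ => (fourierLp 2 (n : ℤ) : L2))
      ≤ (ℂ ∙ (fourierLp 2 (-1) : L2))ᗮ := by
  rw [Submodule.span_le]
  rintro x ⟨n, rfl⟩
  rw [SetLike.mem_coe, Submodule.mem_orthogonal]
  intro w hw
  obtain ⟨c, rfl⟩ := Submodule.mem_span_singleton.1 hw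
  rw [inner_smul_left, inner_fourierLp_eq_zero (by omega : (-1 : ℤ) ≠ (n : ℤ)), mul_zero]

lemma H2_le_orth_em1 : H2 ≤ (ℂ ∙ (fourierLp 2 (-1) : L2))ᗮ :=
  Submodule.topologicalClosure_minimal _ span_le_orth_em1 (Submodule.isClosed_orthogonal _)

/-- `e₋₁ ∈ H²₋`. -/
lemma em1_mem : (fourierLp 2 (-1) : L2) ∈ Hminus := by
  unfold Hminus
  rw [Submodule.mem_orthogonal]
  intro v hv
  have h := H2_le_orth_em1 hv
  rw [Submodule.mem_orthogonal] at h
  exact inner_eq_zero_symm.mp (h _ (Submodule.mem_span_singleton_self _))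

/-- `e₋₁` as an element of `H²₋`. -/
def em1 : Hminus := ⟨(fourierLp 2 (-1) : L2), em1_mem⟩

/-- For `f ∈ K_u`, the function `u f ∈ uH² ⊆ K_u^⊥`. -/
lemma mul_mem_KuP (u : Linf) (f : Ku u) : Mmul u (f : L2) ∈ KuP u := by
  unfold KuP
  rw [Submodule.mem_orthogonal]
  intro v hv
  have hv2 : v ∈ (uH2 u)ᗮ := (Submodule.mem_inf.1 hv).2
  have hm : Mmul u (f : L2) ∈ uH2 u :=
    Submodule.mem_map_of_mem (Submodule.mem_inf.1 f.2).1
  rw [Submodule.mem_orthogonal] at hv2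
  exact inner_eq_zero_symm.mp (hv2 _ hm)

lemma Ku_le_H2 (u : Linf) : Ku u ≤ H2 := inf_le_left

/-- The inclusion `K_u ⊆ H²` as a continuous linear map. -/
def KuIncl (u : Linf) : Ku u →L[ℂ] H2 :=
  LinearMap.mkContinuous (Submodule.inclusion (Ku_le_H2 u)) 1
    (fun f => by rw [one_mul]; exact le_of_eq rfl)

end DTTO

namespace DTTO

/-- The essential range of `φ ∈ L∞`. -/
def essRan (φ : Linf) : Set ℂ :=
  {w : ℂ | ∀ ε > (0 : ℝ), 0 < μT {z : 𝕋c | ‖φ z - w‖ < ε}}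

/-- The essential infimum of `|φ|`. -/
def essInfAbs (φ : Linf) : ℝ := essInf (fun z => ‖φ z‖) μT

lemma muT_ne_zero : (μT : Measure 𝕋c) ≠ 0 := IsProbabilityMeasure.ne_zero μT

lemma ae_norm_le_norm_Linf (φ : Linf) : ∀ᵐ z ∂μT, ‖φ z‖ ≤ ‖φ‖ := by
  filter_upwards [ae_le_eLpNormEssSup (f := ⇑φ) (μ := μT)] with z hz
  have h1 : eLpNormEssSup (⇑φ) μT = eLpNorm (⇑φ) ⊤ μT := (eLpNorm_exponent_top).symm
  have h2 : eLpNorm (⇑φ) ⊤ μT ≠ ⊤ := Lp.eLpNorm_ne_top φ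
  rw [Lp.norm_def]
  have := ENNReal.toReal_mono h2 (h1 ▸ hz)
  simpa using this

lemma bddAbove_S (φ : Linf) : BddAbove {a : ℝ | μT {z | ‖φ z‖ < a} = 0} := by
  refine ⟨‖φ‖ + 1, fun a ha => ?_⟩
  by_contra h
  push_neg at h
  have hae : ∀ᵐ z ∂μT, ‖φ z‖ < a := by
    filter_upwards [ae_norm_le_norm_Linf φ] with z hz
    linarith
  have h1 : μT {z : 𝕋c | ¬ (‖φ z‖ < a)} = 0 := ae_iff.mp hae
  have huniv : μT (Set.univ : Set 𝕋c) = 0 := by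
    have h2 := measure_union_null ha h1
    have h3 : {z : 𝕋c | ‖φ z‖ < a} ∪ {z : 𝕋c | ¬ (‖φ z‖ < a)}
        = Set.univ := by
      ext z; simp [em, le_or_gt, lt_or_ge]
    rwa [h3] at h2
  exact muT_ne_zero (by rwa [Measure.measure_univ_eq_zero] at huniv)

lemma essInfAbs_eq_sSup (φ : Linf) :
    essInfAbs φ = sSup {a : ℝ | μT {z | ‖φ z‖ < a} = 0} :=
  essInf_eq_sSup μT _

lemma essInfAbs_nonneg (φ : Linf) : 0 ≤ essInfAbs φ := by
  rw [essInfAbs_eq_sSup]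
  refine le_csSup (bddAbove_S φ) ?_
  simp only [Set.mem_setOf_eq]
  convert measure_empty
  · ext z; simp [not_lt_of_ge (norm_nonneg _)]
  · infer_instance

lemma pos_meas_lt_essInfAbs_add (φ : Linf) {ε : ℝ} (hε : 0 < ε) :
    0 < μT {z | ‖φ z‖ < essInfAbs φ + ε} := by
  by_contra h
  push_neg at h
  have h0 : μT {z | ‖φ z‖ < essInfAbs φ + ε} = 0 := le_antisymm h zero_le
  have : essInfAbs φ + ε ≤ essInfAbs φ := by
    nth_rewrite 2 [essInfAbs_eq_sSup]
    exact le_csSup (bddAbove_S φ) h0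
  linarith

lemma ae_essInfAbs_le (φ : Linf) : ∀ᵐ z ∂μT, essInfAbs φ ≤ ‖φ z‖ :=
  ae_essInf_le ⟨0, Filter.eventually_map.mpr (Filter.Eventually.of_forall fun z =>
    norm_nonneg _)⟩

lemma essInfAbs_le_abs_of_mem_essRan {φ : Linf} {w : ℂ} (hw : w ∈ essRan φ) :
    essInfAbs φ ≤ ‖w‖ := by
  by_contra h
  push_neg at h
  set ε := (essInfAbs φ - ‖w‖) / 2 with hεdef
  have hε : 0 < ε := by simp [hεdef]; linarith
  have hpos := hw ε hε
  have hnull : μT ({z : 𝕋c | ¬ essInfAbs φ ≤ ‖φ z‖}) = 0 := ae_iff.mp (ae_essInfAbs_le φ)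
  have hsub : {z : 𝕋c | ‖φ z - w‖ < ε} ⊆ {z : 𝕋c | ¬ essInfAbs φ ≤ ‖φ z‖} := by
    intro z hz
    simp only [Set.mem_setOf_eq, not_le] at hz ⊢
    have : ‖φ z‖ ≤ ‖φ z - w‖ + ‖w‖ := by
      simpa using norm_add_le (φ z - w) w
    have : ‖φ z‖ < ε + ‖w‖ := by linarith
    calc ‖φ z‖ < ε + ‖w‖ := this
    _ < essInfAbs φ := by rw [hεdef]; linarith
  exact absurd (measure_mono_null hsub hnull) (by exact ne_of_gt hpos)

lemma essRan_isClosed (φ : Linf) : IsClosed (essRan φ) := by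
  rw [← isOpen_compl_iff, isOpen_iff_forall_mem_open]
  intro w hw
  simp only [Set.mem_compl_iff, essRan, Set.mem_setOf_eq, not_forall, not_lt, exists_prop] at hw
  obtain ⟨ε, hε, hμ⟩ := hw
  have hμ0 : μT {z : 𝕋c | ‖φ z - w‖ < ε} = 0 := le_antisymm hμ zero_le
  refine ⟨Metric.ball w (ε / 2), ?_, Metric.isOpen_ball, Metric.mem_ball_self (by linarith)⟩
  intro w' hw'
  simp only [Set.mem_compl_iff, essRan, Set.mem_setOf_eq, not_forall, not_lt, exists_prop]
  refine ⟨ε / 2, by linarith, ?_⟩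
  have hsub : {z : 𝕋c | ‖φ z - w'‖ < ε / 2} ⊆ {z : 𝕋c | ‖φ z - w‖ < ε} := by
    intro z hz
    simp only [Set.mem_setOf_eq] at hz ⊢
    have hd : ‖w' - w‖ < ε / 2 := by
      simpa [Complex.dist_eq] using hw'
    calc ‖φ z - w‖ = ‖(φ z - w') + (w' - w)‖ := by ring_nf
    _ ≤ ‖φ z - w'‖ + ‖w' - w‖ := norm_add_le _ _
    _ < ε := by linarith
  exact le_of_eq (measure_mono_null hsub hμ0)

lemma exists_essRan_lt (φ : Linf) {ε : ℝ} (hε : 0 < ε) :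
    ∃ w ∈ essRan φ, ‖w‖ < essInfAbs φ + ε := by
  by_contra hcon
  push_neg at hcon
  -- every w in the closed ball of radius essInfAbs + ε/2 fails to be in essRan
  set K : Set ℂ := Metric.closedBall 0 (essInfAbs φ + ε / 2) with hK
  have hKc : IsCompact K := isCompact_closedBall _ _
  have hcover : ∀ w ∈ K, ∃ r > (0:ℝ), μT {z : 𝕋c | ‖φ z - w‖ < r} = 0 := by
    intro w hwK
    have hnot : w ∉ essRan φ := by
      intro hmem
      have := hcon w hmem
      have : ‖w‖ ≤ essInfAbs φ + ε / 2 := by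
        simpa [Complex.dist_eq] using Metric.mem_closedBall.mp hwK
      linarith [hcon w hmem]
    simp only [essRan, Set.mem_setOf_eq, not_forall, not_lt, exists_prop] at hnot
    obtain ⟨r, hr, hμ⟩ := hnot
    exact ⟨r, hr, le_antisymm hμ zero_le⟩
  choose! r hr hrnull using hcover
  have hsub : K ⊆ ⋃ w ∈ K, Metric.ball w (r w) := by
    intro w hwK
    exact Set.mem_biUnion hwK (Metric.mem_ball_self (hr w hwK))
  obtain ⟨t, htK, htfin, htsub⟩ := hKc.elim_finite_subcover_image (fun w _ => Metric.isOpen_ball) hsub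
  -- the positive measure set is covered by the null preimages
  have hposset := pos_meas_lt_essInfAbs_add φ (half_pos hε)
  have hnull : μT {z : 𝕋c | ‖φ z‖ < essInfAbs φ + ε / 2} = 0 := by
    have hsub2 : {z : 𝕋c | ‖φ z‖ < essInfAbs φ + ε / 2}
        ⊆ ⋃ w ∈ t, {z : 𝕋c | ‖φ z - w‖ < r w} := by
      intro z hz
      simp only [Set.mem_setOf_eq] at hz
      have hzK : φ z ∈ K := by
        simp only [hK, Metric.mem_closedBall, Complex.dist_eq, sub_zero]
        exact hz.le
      have := htsub hzK
      simp only [Set.mem_iUnion, exists_prop] at this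
      obtain ⟨w, hwt, hwball⟩ := this
      refine Set.mem_biUnion hwt ?_
      simpa [Complex.dist_eq] using hwball
    refine measure_mono_null hsub2 ((measure_biUnion_null_iff htfin.countable).mpr ?_)
    intro w hwt
    exact hrnull w (htK hwt)
  exact absurd hnull (ne_of_gt hposset)

lemma ae_mem_essRan (φ : Linf) : ∀ᵐ z ∂μT, φ z ∈ essRan φ := by
  set A : ℚ × ℚ → ℕ → Set 𝕋c := fun p k =>
    {z | ‖φ z - ((p.1 : ℝ) + (p.2 : ℝ) * I)‖ < 1 / (k + 1)} with hA
  have hN : μT (⋃ (p : ℚ × ℚ) (k : ℕ), if μT (A p k) = 0 then A p k else ∅) = 0 := by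
    refine measure_iUnion_null fun p => measure_iUnion_null fun k => ?_
    split_ifs with h
    exacts [h, measure_empty]
  rw [ae_iff]
  refine measure_mono_null ?_ hN
  intro z hz
  simp only [Set.mem_setOf_eq, essRan, not_forall, not_lt, exists_prop] at hz
  obtain ⟨ε, hε, hμ⟩ := hz
  have hμ0 : μT {y : 𝕋c | ‖φ y - φ z‖ < ε} = 0 := le_antisymm hμ zero_le
  obtain ⟨k, hk⟩ := exists_nat_gt (2 / ε)
  have hk1 : (0:ℝ) < k + 1 := by positivity
  have hkε : 2 / (k + 1 : ℝ) < ε := by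
    rw [div_lt_iff₀ hk1]
    have h2ε : 2 / ε < k + 1 := by linarith
    rw [div_lt_iff₀ hε] at h2ε
    linarith
  obtain ⟨qr, hqr⟩ := exists_rat_near (φ z).re (by positivity : (0:ℝ) < 1 / (2 * (k + 1)))
  obtain ⟨qi, hqi⟩ := exists_rat_near (φ z).im (by positivity : (0:ℝ) < 1 / (2 * (k + 1)))
  set q : ℂ := ((qr : ℝ) + (qi : ℝ) * I) with hq
  have hqclose : ‖φ z - q‖ < 1 / (k + 1) := by
    have h1 : ‖φ z - q‖ ≤ |(φ z - q).re| + |(φ z - q).im| :=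
      Complex.norm_le_abs_re_add_abs_im _
    have hre : (φ z - q).re = (φ z).re - qr := by simp [hq]
    have him : (φ z - q).im = (φ z).im - qi := by simp [hq]
    rw [hre, him] at h1
    calc ‖φ z - q‖ ≤ |(φ z).re - qr| + |(φ z).im - qi| := h1
    _ < 1 / (2 * (k + 1)) + 1 / (2 * (k + 1)) := by exact add_lt_add hqr hqi
    _ = 1 / (k + 1) := by rw [← two_mul]; field_simp
  have hsub : A (qr, qi) k ⊆ {y : 𝕋c | ‖φ y - φ z‖ < ε} := by
    intro y hy
    simp only [hA, Set.mem_setOf_eq] at hy ⊢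
    calc ‖φ y - φ z‖ = ‖(φ y - q) + (q - φ z)‖ := by ring_nf
    _ ≤ ‖φ y - q‖ + ‖q - φ z‖ := norm_add_le _ _
    _ < 1 / (k + 1) + 1 / (k + 1) := by
        refine add_lt_add ?_ ?_
        · exact hy
        · rw [← norm_neg, neg_sub]; exact hqclose
    _ = 2 / (k + 1) := by ring
    _ < ε := hkε
  have hnullA : μT (A (qr, qi) k) = 0 := measure_mono_null hsub hμ0
  refine Set.mem_iUnion.mpr ⟨(qr, qi), Set.mem_iUnion.mpr ⟨k, ?_⟩⟩
  rw [if_pos hnullA]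
  simp only [hA, Set.mem_setOf_eq]
  exact hqclose

lemma exists_sep (φ : Linf) (hconv : Convex ℝ (essRan φ)) (hpos : 0 < essInfAbs φ) :
    ∃ α : ℂ, ‖α‖ = 1 ∧ ∀ w ∈ essRan φ, essInfAbs φ ≤ (starRingEnd ℂ α * w).re := by
  obtain ⟨w₀, hw₀, _⟩ := exists_essRan_lt φ one_pos
  have hcomplete : IsComplete (essRan φ) := (essRan_isClosed φ).isComplete
  obtain ⟨v, hv, hmin⟩ := exists_norm_eq_iInf_of_complete_convex ⟨w₀, hw₀⟩ hcomplete hconv (0 : ℂ)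
  have hchar := (norm_eq_iInf_iff_real_inner_le_zero hconv hv).mp hmin
  have hvnorm : essInfAbs φ ≤ ‖v‖ := by
    have := essInfAbs_le_abs_of_mem_essRan hv
    exact this
  have hvpos : (0:ℝ) < ‖v‖ := lt_of_lt_of_le hpos hvnorm
  refine ⟨(‖v‖ : ℂ)⁻¹ * v, ?_, ?_⟩
  · rw [norm_mul, norm_inv, Complex.norm_real, Real.norm_eq_abs, abs_of_pos hvpos,
      inv_mul_cancel₀ (ne_of_gt hvpos)]
  · intro w hw
    have h1 := hchar w hw
    rw [zero_sub, Complex.inner, mul_comm] at h1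
    have hvv : (starRingEnd ℂ v * v).re = ‖v‖ ^ 2 := by
      rw [mul_comm, Complex.mul_conj]
      simp [Complex.normSq_eq_norm_sq, ← Complex.ofReal_pow]
    have hexp : (starRingEnd ℂ (-v) * (w - v)).re
        = -((starRingEnd ℂ v * w).re) + (starRingEnd ℂ v * v).re := by
      simp only [map_neg, neg_mul, mul_sub, Complex.neg_re, Complex.sub_re]
      ring
    rw [hexp, hvv] at h1
    have h2 : ‖v‖ ^ 2 ≤ (starRingEnd ℂ v * w).re := by linarith
    rw [map_mul, map_inv₀, Complex.conj_ofReal, mul_assoc, ← Complex.ofReal_inv,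
      Complex.re_ofReal_mul]
    calc essInfAbs φ ≤ ‖v‖ := hvnorm
    _ = ‖v‖⁻¹ * ‖v‖ ^ 2 := by field_simp [sq]
    _ ≤ ‖v‖⁻¹ * (starRingEnd ℂ v * w).re :=
        mul_le_mul_of_nonneg_left h2 (inv_nonneg.mpr hvpos.le)

lemma coeFn_Mmul (φ : Linf) (f : L2) : ⇑(Mmul φ f) =ᵐ[μT] ⇑φ • ⇑f :=
  MemLp.coeFn_toLp (memL2_smul φ f)

lemma Dop_apply (u φ : Linf) (f : KuP u) :
    Dop u φ f = Submodule.orthogonalProjectionOnto (KuP u) (Mmul φ (f : L2)) := rfl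

lemma inner_Dop (u φ : Linf) (f : KuP u) :
    (inner ℂ (f : L2) ((Dop u φ f : KuP u) : L2) : ℂ) = inner ℂ (f : L2) (Mmul φ (f : L2)) := by
  rw [Dop_apply]
  have hsub := Submodule.sub_starProjection_mem_orthogonal (K := KuP u) (Mmul φ (f : L2))
  have h0 : (inner ℂ (f : L2)
      (Mmul φ (f : L2) - (Submodule.orthogonalProjectionOnto (KuP u) (Mmul φ (f : L2)) : L2)) : ℂ) = 0 :=
    Submodule.inner_right_of_mem_orthogonal f.2 hsub
  rw [inner_sub_right] at h0
  linear_combination -h0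

lemma essInfAbs_le_norm_Dop (u φ : Linf) (hconv : Convex ℝ (essRan φ))
    (f : KuP u) (hf : ‖f‖ = 1) : essInfAbs φ ≤ ‖Dop u φ f‖ := by
  rcases (essInfAbs_nonneg φ).eq_or_lt with heq | hpos
  · rw [← heq]; exact norm_nonneg _
  obtain ⟨α, hα, hsep⟩ := exists_sep φ hconv hpos
  set d := essInfAbs φ with hd
  set g : L2 := Mmul φ (f : L2) with hg
  have hint : Integrable (fun z => (inner ℂ ((f : L2) z) (g z) : ℂ)) μT :=
    L2.integrable_inner (𝕜 := ℂ) (f : L2) g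
  have hint2 : Integrable (fun z => starRingEnd ℂ α * (inner ℂ ((f : L2) z) (g z) : ℂ)) μT :=
    hint.const_mul _
  have hintf : Integrable (fun z => (inner ℂ ((f : L2) z) ((f : L2) z) : ℂ)) μT :=
    L2.integrable_inner (𝕜 := ℂ) (f : L2) (f : L2)
  -- a.e. pointwise bound
  have hae : ∀ᵐ z ∂μT, d * ‖(f : L2) z‖ ^ 2
      ≤ (starRingEnd ℂ α * (inner ℂ ((f : L2) z) (g z) : ℂ)).re := by
    filter_upwards [coeFn_Mmul φ (f : L2), ae_mem_essRan φ] with z hgz hφz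
    have hgz' : g z = φ z * (f : L2) z := by
      rw [hg, hgz]; rfl
    have hinner : (inner ℂ ((f : L2) z) (g z) : ℂ)
        = φ z * ((starRingEnd ℂ) ((f : L2) z) * (f : L2) z) := by
      rw [RCLike.inner_apply, hgz']; ring
    have hconj : (starRingEnd ℂ) ((f : L2) z) * (f : L2) z = ((‖(f : L2) z‖ ^ 2 : ℝ) : ℂ) := by
      rw [mul_comm, Complex.mul_conj]
      norm_cast
      rw [Complex.normSq_eq_norm_sq]
    rw [hinner, hconj]
    have : (starRingEnd ℂ α * (φ z * ((‖(f : L2) z‖ ^ 2 : ℝ) : ℂ))).re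
        = (starRingEnd ℂ α * φ z).re * ‖(f : L2) z‖ ^ 2 := by
      rw [← mul_assoc, mul_comm _ (((‖(f : L2) z‖ ^ 2 : ℝ) : ℂ)), Complex.re_ofReal_mul]
      ring
    rw [this]
    exact mul_le_mul_of_nonneg_right (hsep _ hφz) (by positivity)
  -- pointwise identity : ‖(f:L2) z‖^2 = re (inner)
  have haef : (fun z => d * ‖(f : L2) z‖ ^ 2)
      = fun z => d * (RCLike.re (inner ℂ ((f : L2) z) ((f : L2) z) : ℂ)) := by
    funext z
    rw [inner_self_eq_norm_sq]
  -- integrate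
  have hmono : ∫ z, d * RCLike.re ((inner ℂ ((f : L2) z) ((f : L2) z) : ℂ)) ∂μT
      ≤ ∫ z, RCLike.re (starRingEnd ℂ α * (inner ℂ ((f : L2) z) (g z) : ℂ)) ∂μT := by
    refine integral_mono_ae ((hintf.re).const_mul d) hint2.re ?_
    rw [← haef] at *
    filter_upwards [hae] with z hz
    simpa using hz
  have hnorm1 : ‖(f : L2)‖ = 1 := hf
  have hleft : ∫ z, d * RCLike.re ((inner ℂ ((f : L2) z) ((f : L2) z) : ℂ)) ∂μT = d := by
    rw [integral_const_mul, integral_re hintf, ← L2.inner_def, inner_self_eq_norm_sq, hnorm1]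
    norm_num
  have hright : ∫ z, RCLike.re (starRingEnd ℂ α * (inner ℂ ((f : L2) z) (g z) : ℂ)) ∂μT
      = RCLike.re (starRingEnd ℂ α * (inner ℂ (f : L2) g : ℂ)) := by
    rw [integral_re hint2, integral_const_mul, ← L2.inner_def]
  have hchain : d ≤ RCLike.re (starRingEnd ℂ α * (inner ℂ (f : L2) g : ℂ)) := by
    rw [← hright]
    exact le_trans (le_of_eq hleft.symm) hmono
  have habs : RCLike.re (starRingEnd ℂ α * (inner ℂ (f : L2) g : ℂ))
      ≤ ‖(inner ℂ (f : L2) g : ℂ)‖ := by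
    refine le_trans (RCLike.re_le_norm _) ?_
    rw [norm_mul]
    have : ‖starRingEnd ℂ α‖ = 1 := by
      rw [RCLike.norm_conj, hα]
    rw [this, one_mul]
  have hfinal : ‖(inner ℂ (f : L2) g : ℂ)‖ ≤ ‖Dop u φ f‖ := by
    rw [hg, ← inner_Dop u φ f]
    calc ‖(inner ℂ (f : L2) ((Dop u φ f : KuP u) : L2) : ℂ)‖
        ≤ ‖(f : L2)‖ * ‖((Dop u φ f : KuP u) : L2)‖ := norm_inner_le_norm _ _
    _ = ‖Dop u φ f‖ := by rw [hnorm1, one_mul]; rfl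
  linarith

lemma Lp_norm_mono {f g : L2} (h : ∀ᵐ z ∂μT, ‖f z‖ ≤ ‖g z‖) : ‖f‖ ≤ ‖g‖ := by
  rw [Lp.norm_def, Lp.norm_def]
  exact ENNReal.toReal_mono (Lp.eLpNorm_ne_top g) (eLpNorm_mono_ae h)

lemma norm_fourier_apply (m : ℤ) (z : 𝕋c) : ‖fourier m z‖ = 1 := Circle.norm_coe _

lemma Mmul_fourierLp (m j : ℤ) :
    Mmul (fourierLp ⊤ m) (fourierLp 2 j : L2) = (fourierLp 2 (m + j) : L2) := by
  refine Lp.ext ?_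
  filter_upwards [coeFn_Mmul (fourierLp ⊤ m) (fourierLp 2 j), coeFn_fourierLp ⊤ m,
    coeFn_fourierLp 2 j, coeFn_fourierLp 2 (m + j)] with z h1 h2 h3 h4
  rw [h1, h4, Pi.smul_apply', h2, h3, smul_eq_mul, ← fourier_add]

lemma norm_Mmul_fourier (m : ℤ) (x : L2) : ‖Mmul (fourierLp ⊤ m) x‖ = ‖x‖ := by
  rw [Lp.norm_def, Lp.norm_def]
  congr 1
  refine eLpNorm_congr_norm_ae ?_
  filter_upwards [coeFn_Mmul (fourierLp ⊤ m) x, coeFn_fourierLp ⊤ m] with z h1 h2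
  rw [h1, Pi.smul_apply', h2, smul_eq_mul, norm_mul, norm_fourier_apply, one_mul]

lemma fourierLp_mem_H2_orth {j : ℤ} (hj : j < 0) : (fourierLp 2 j : L2) ∈ H2ᗮ := by
  have hle : H2 ≤ (ℂ ∙ (fourierLp 2 j : L2))ᗮ := by
    refine Submodule.topologicalClosure_minimal _ ?_ (Submodule.isClosed_orthogonal _)
    rw [Submodule.span_le]
    rintro x ⟨n, rfl⟩
    rw [SetLike.mem_coe, Submodule.mem_orthogonal]
    intro w hw
    obtain ⟨c, rfl⟩ := Submodule.mem_span_singleton.1 hw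
    rw [inner_smul_left, inner_fourierLp_eq_zero (by omega : j ≠ (n : ℤ)), mul_zero]
  rw [Submodule.mem_orthogonal]
  intro v hv
  have h := hle hv
  rw [Submodule.mem_orthogonal] at h
  exact inner_eq_zero_symm.mp (h _ (Submodule.mem_span_singleton_self _))

lemma exists_shift_mem_orth (t : L2)
    (ht : t ∈ Submodule.span ℂ (Set.range (@fourierLp (2 * Real.pi) _ 2 _))) :
    ∃ N : ℤ, ∀ m : ℤ, m < N → Mmul (fourierLp ⊤ m) t ∈ H2ᗮ := by
  induction ht using Submodule.span_induction with
  | mem x hx =>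
      obtain ⟨j, rfl⟩ := hx
      exact ⟨-j, fun m hm => by
        rw [Mmul_fourierLp]; exact fourierLp_mem_H2_orth (by omega)⟩
  | zero => exact ⟨0, fun m _ => by rw [map_zero]; exact Submodule.zero_mem _⟩
  | add x y hx hy ihx ihy =>
      obtain ⟨N1, h1⟩ := ihx
      obtain ⟨N2, h2⟩ := ihy
      exact ⟨min N1 N2, fun m hm => by
        rw [map_add]
        exact Submodule.add_mem _ (h1 m (lt_of_lt_of_le hm (min_le_left _ _)))
          (h2 m (lt_of_lt_of_le hm (min_le_right _ _)))⟩
  | smul a x hx ihx =>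
      obtain ⟨N, h⟩ := ihx
      exact ⟨N, fun m hm => by rw [_root_.map_smul]; exact Submodule.smul_mem _ _ (h m hm)⟩

lemma exists_approx (x : L2) {δ : ℝ} (hδ : 0 < δ) :
    ∃ t ∈ Submodule.span ℂ (Set.range (@fourierLp (2 * Real.pi) _ 2 _)), ‖x - t‖ < δ := by
  have htop := span_fourierLp_closure_eq_top (T := 2 * Real.pi) (p := 2) (by norm_num)
  have hx : x ∈ closure ((Submodule.span ℂ (Set.range (@fourierLp (2 * Real.pi) _ 2 _))) :
      Set L2) := by
    have : x ∈ (Submodule.span ℂ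
        (Set.range (@fourierLp (2 * Real.pi) _ 2 _))).topologicalClosure := by
      rw [htop]; trivial
    exact this
  obtain ⟨t, htmem, htclose⟩ := SeminormedAddCommGroup.mem_closure_iff.mp hx δ hδ
  exact ⟨t, htmem, htclose⟩

lemma norm_orthProj_le (K : Submodule ℂ L2) [K.HasOrthogonalProjection] (v : L2) :
    ‖(Submodule.orthogonalProjectionOnto K v : L2)‖ ≤ ‖v‖ := by
  calc ‖(Submodule.orthogonalProjectionOnto K v : L2)‖ = ‖Submodule.orthogonalProjectionOnto K v‖ := rfl
  _ ≤ ‖Submodule.orthogonalProjectionOnto K‖ * ‖v‖ := (Submodule.orthogonalProjectionOnto K).le_opNorm v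
  _ ≤ 1 * ‖v‖ := mul_le_mul_of_nonneg_right (Submodule.orthogonalProjectionOnto_norm_le K) (norm_nonneg v)
  _ = ‖v‖ := one_mul _

lemma exists_shift_small (u : Linf) (x : L2) {δ : ℝ} (hδ : 0 < δ) :
    ∃ m : ℤ, ‖(Submodule.orthogonalProjectionOnto (Ku u) (Mmul (fourierLp ⊤ m) x) : L2)‖ < δ := by
  obtain ⟨t, ht, hclose⟩ := exists_approx x hδ
  obtain ⟨N, hN⟩ := exists_shift_mem_orth t ht
  refine ⟨N - 1, ?_⟩
  have hm : N - 1 < N := by omega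
  set y := Mmul (fourierLp ⊤ (N - 1)) x with hy
  have h1 : Submodule.orthogonalProjectionOnto (Ku u) y
      = Submodule.orthogonalProjectionOnto (Ku u) ((Submodule.orthogonalProjectionOnto H2 y : L2)) :=
    (Submodule.orthogonalProjectionOnto_starProjection_of_le (Ku_le_H2 u) y).symm
  have h2 : Submodule.orthogonalProjectionOnto H2 y
      = Submodule.orthogonalProjectionOnto H2 (Mmul (fourierLp ⊤ (N - 1)) (x - t)) := by
    have hxeq : t + (x - t) = x := by abel
    have hsplit : Mmul (fourierLp ⊤ (N - 1)) t + Mmul (fourierLp ⊤ (N - 1)) (x - t) = y := by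
      rw [← map_add, hxeq]
    rw [← hsplit, map_add,
      Submodule.orthogonalProjectionOnto_apply_of_mem_orthogonal (hN _ hm), zero_add]
  calc ‖(Submodule.orthogonalProjectionOnto (Ku u) y : L2)‖
      = ‖(Submodule.orthogonalProjectionOnto (Ku u) ((Submodule.orthogonalProjectionOnto H2 y : L2)) : L2)‖ := by rw [h1]
  _ ≤ ‖(Submodule.orthogonalProjectionOnto H2 y : L2)‖ := norm_orthProj_le _ _
  _ = ‖(Submodule.orthogonalProjectionOnto H2 (Mmul (fourierLp ⊤ (N - 1)) (x - t)) : L2)‖ := by rw [h2]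
  _ ≤ ‖Mmul (fourierLp ⊤ (N - 1)) (x - t)‖ := norm_orthProj_le _ _
  _ = ‖x - t‖ := norm_Mmul_fourier _ _
  _ < δ := hclose

lemma norm_Mmul_le (φ : Linf) (x : L2) : ‖Mmul φ x‖ ≤ ‖φ‖ * ‖x‖ := by
  have h : ‖Mmul φ‖ ≤ ‖φ‖ := LinearMap.mkContinuous_norm_le _ (norm_nonneg φ) _
  exact le_trans ((Mmul φ).le_opNorm x) (mul_le_mul_of_nonneg_right h (norm_nonneg x))

lemma norm_fourierL2 (j : ℤ) : ‖(fourierLp 2 j : L2)‖ = 1 := orthonormal_fourier.1 j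

lemma Hminus_le_KuP (u : Linf) : Hminus ≤ KuP u := Submodule.orthogonal_le (Ku_le_H2 u)

lemma sphere_nonempty (u : Linf) : Nonempty {x : KuP u // ‖x‖ = 1} := by
  refine ⟨⟨⟨(fourierLp 2 (-1) : L2), Hminus_le_KuP u em1_mem⟩, ?_⟩⟩
  simpa using norm_fourierL2 (-1)

lemma minMod_ge (u φ : Linf) (hconv : Convex ℝ (essRan φ)) :
    essInfAbs φ ≤ minMod (Dop u φ) := by
  have := sphere_nonempty u
  exact le_ciInf fun x => essInfAbs_le_norm_Dop u φ hconv x.1 x.2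

set_option maxHeartbeats 2000000 in
lemma minMod_le (u φ : Linf) : minMod (Dop u φ) ≤ essInfAbs φ := by
  set d := essInfAbs φ with hddef
  have hd0 : 0 ≤ d := essInfAbs_nonneg φ
  refine le_of_forall_pos_le_add fun ε hε => ?_
  set ε' := ε / 3 with hε'def
  have hε' : 0 < ε' := by positivity
  obtain ⟨w, hw, hwlt⟩ := exists_essRan_lt φ hε'
  set E := {z : 𝕋c | ‖φ z - w‖ < ε'} with hE
  have hEmeas : MeasurableSet E := by
    have hEeq : E = ⇑φ ⁻¹' Metric.ball w ε' := by
      ext z; simp [hE, Metric.mem_ball, Complex.dist_eq]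
    rw [hEeq]
    exact (Lp.stronglyMeasurable φ).measurable measurableSet_ball
  have hμE : 0 < μT E := hw ε' hε'
  have hμEtop : μT E ≠ ∞ := measure_ne_top _ _
  set g0 : L2 := indicatorConstLp 2 hEmeas hμEtop (1 : ℂ) with hg0
  set r := ‖g0‖ with hr
  have hrpos : 0 < r := by
    rw [hr, hg0, norm_indicatorConstLp (by norm_num) (by norm_num)]
    have h1 : (0:ℝ) < (μT E).toReal := ENNReal.toReal_pos (ne_of_gt hμE) hμEtop
    simp only [norm_one, one_mul]
    positivity
  set C := ‖φ‖ + d + ε + 1 with hC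
  have hCpos : 0 < C := by
    have := norm_nonneg φ
    rw [hC]; linarith
  set δ := min (r / 2) (ε' * r / C) with hδdef
  have hδpos : 0 < δ := lt_min (half_pos hrpos) (div_pos (mul_pos hε' hrpos) hCpos)
  have hδr : δ ≤ r / 2 := min_le_left _ _
  have hδC : δ ≤ ε' * r / C := min_le_right _ _
  obtain ⟨m, hm⟩ := exists_shift_small u g0 hδpos
  set g := Mmul (fourierLp ⊤ m) g0 with hg
  have hgnorm : ‖g‖ = r := norm_Mmul_fourier m g0
  set Pg := ((Submodule.orthogonalProjectionOnto (Ku u) g : Ku u) : L2) with hPg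
  have hPgnorm : ‖Pg‖ < δ := hm
  have hf0mem : g - Pg ∈ KuP u := Submodule.sub_starProjection_mem_orthogonal (K := Ku u) g
  set F : KuP u := ⟨g - Pg, hf0mem⟩ with hF
  have hFnorm : r - δ ≤ ‖F‖ := by
    have h1 : ‖F‖ = ‖g - Pg‖ := rfl
    have h2 := norm_sub_norm_le g Pg
    rw [h1]
    rw [hgnorm] at h2
    linarith
  have hFpos : 0 < ‖F‖ := lt_of_lt_of_le (by linarith) hFnorm
  -- bound on ‖Mmul φ g‖
  have hMg : ‖Mmul φ g‖ ≤ (d + 2 * ε') * r := by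
    have hae : ∀ᵐ z ∂μT,
        ‖(Mmul φ g) z‖ ≤ ‖((((d + 2 * ε' : ℝ)) : ℂ) • g0) z‖ := by
      filter_upwards [coeFn_Mmul φ g, coeFn_Mmul (fourierLp ⊤ m) g0, coeFn_fourierLp ⊤ m,
        indicatorConstLp_coeFn (p := 2) (hs := hEmeas) (hμs := hμEtop) (c := (1:ℂ)),
        Lp.coeFn_smul (((d + 2 * ε' : ℝ)) : ℂ) g0] with z h1 h2 h3 h4 h5
      rw [h1, Pi.smul_apply', hg, h2, Pi.smul_apply', h3, h5, Pi.smul_apply]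
      rw [show (⇑g0 : 𝕋c → ℂ) z = Set.indicator E (fun _ => (1:ℂ)) z from h4]
      by_cases hzE : z ∈ E
      · rw [Set.indicator_of_mem hzE]
        simp only [smul_eq_mul, mul_one, norm_mul]
        have hφz : ‖φ z‖ ≤ d + 2 * ε' := by
          have h6 : ‖φ z - w‖ < ε' := hzE
          have h7 : ‖w‖ < d + ε' := hwlt
          have h8 : ‖φ z‖ ≤ ‖φ z - w‖ + ‖w‖ := by
            simpa using norm_add_le (φ z - w) w
          linarith
        calc ‖φ z‖ * ‖fourier m z‖ = ‖φ z‖ := by rw [norm_fourier_apply, mul_one]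
        _ ≤ d + 2 * ε' := hφz
        _ = ‖(((d + 2 * ε' : ℝ)) : ℂ)‖ := by
            rw [Complex.norm_real, Real.norm_eq_abs, _root_.abs_of_nonneg (by linarith)]
      · rw [Set.indicator_of_notMem hzE]
        simp only [smul_zero, norm_zero]
        exact le_refl _
    have hle := Lp_norm_mono hae
    rwa [norm_smul, Complex.norm_real, Real.norm_eq_abs, _root_.abs_of_nonneg (by linarith : (0:ℝ) ≤ d + 2 * ε'),
      ← hr] at hle
  -- bound on ‖Dop F‖
  have hDF : ‖Dop u φ F‖ ≤ (d + 2 * ε') * r + ‖φ‖ * δ := by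
    have h0 : ‖Dop u φ F‖
        = ‖((Submodule.orthogonalProjectionOnto (KuP u) (Mmul φ ((F : KuP u) : L2)) : KuP u) : L2)‖ := rfl
    have hFc : ((F : KuP u) : L2) = g - Pg := rfl
    calc ‖Dop u φ F‖ ≤ ‖Mmul φ ((F : KuP u) : L2)‖ := by
          rw [h0]; exact norm_orthProj_le _ _
    _ = ‖Mmul φ g - Mmul φ Pg‖ := by rw [hFc, map_sub]
    _ ≤ ‖Mmul φ g‖ + ‖Mmul φ Pg‖ := norm_sub_le _ _
    _ ≤ (d + 2 * ε') * r + ‖φ‖ * ‖Pg‖ := by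
        refine add_le_add hMg ?_
        exact norm_Mmul_le φ Pg
    _ ≤ (d + 2 * ε') * r + ‖φ‖ * δ := by
        refine add_le_add le_rfl ?_
        exact mul_le_mul_of_nonneg_left hPgnorm.le (norm_nonneg φ)
  -- unit vector
  set x : KuP u := (((‖F‖⁻¹ : ℝ)) : ℂ) • F with hx
  have hx1 : ‖x‖ = 1 := by
    rw [hx, norm_smul, Complex.norm_real, Real.norm_eq_abs,
      _root_.abs_of_nonneg (inv_nonneg.mpr (norm_nonneg F))]
    exact inv_mul_cancel₀ (ne_of_gt hFpos)
  have hmin : minMod (Dop u φ) ≤ ‖Dop u φ x‖ := by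
    refine ciInf_le ⟨0, ?_⟩ (⟨x, hx1⟩ : {x : KuP u // ‖x‖ = 1})
    rintro y ⟨p, rfl⟩
    exact norm_nonneg _
  have hDx : ‖Dop u φ x‖ = ‖F‖⁻¹ * ‖Dop u φ F‖ := by
    rw [hx, _root_.map_smul, norm_smul, Complex.norm_real, Real.norm_eq_abs,
      _root_.abs_of_nonneg (inv_nonneg.mpr (norm_nonneg F))]
  -- arithmetic
  have hrδ : 0 < r - δ := by linarith
  have hkey : ((d + 2 * ε') * r + ‖φ‖ * δ) / (r - δ) ≤ d + ε := by
    rw [div_le_iff₀ hrδ]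
    have hδCle : δ * (‖φ‖ + d + 3 * ε') ≤ ε' * r := by
      have h1 : δ * (C - 1) ≤ (ε' * r / C) * (C - 1) := by
        refine mul_le_mul_of_nonneg_right hδC ?_
        have := norm_nonneg φ
        rw [hC]; linarith
      have h2 : (ε' * r / C) * (C - 1) ≤ ε' * r := by
        rw [div_mul_eq_mul_div, div_le_iff₀ hCpos]
        nlinarith [mul_pos hε' hrpos]
      have h3 : C - 1 = ‖φ‖ + d + ε := by rw [hC]; ring
      have h4 : ε = 3 * ε' := by rw [hε'def]; ring
      calc δ * (‖φ‖ + d + 3 * ε') = δ * (C - 1) := by rw [h3, h4]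
      _ ≤ ε' * r := le_trans h1 h2
    have h5 : ε = 3 * ε' := by rw [hε'def]; ring
    nlinarith [mul_nonneg (norm_nonneg φ) hδpos.le, hδpos.le]
  have hchain : ‖F‖⁻¹ * ‖Dop u φ F‖ ≤ ((d + 2 * ε') * r + ‖φ‖ * δ) / (r - δ) := by
    rw [div_eq_inv_mul]
    refine mul_le_mul ?_ hDF (norm_nonneg _) (inv_nonneg.mpr hrδ.le)
    exact inv_anti₀ hrδ hFnorm
  calc minMod (Dop u φ) ≤ ‖Dop u φ x‖ := hmin
  _ = ‖F‖⁻¹ * ‖Dop u φ F‖ := hDx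
  _ ≤ ((d + 2 * ε') * r + ‖φ‖ * δ) / (r - δ) := hchain
  _ ≤ d + ε := hkey

/-- If `D_φ` is normal and `ess ran φ` is convex, then `m(D_φ) = ess inf |φ|`. -/
theorem minMod_normal_DTTO_of_convex_essRan (u φ : Linf) (hu : IsInnerFn u)
    (hnc : Nonconst u)
    (hnormal : ContinuousLinearMap.adjoint (Dop u φ) ∘L Dop u φ
        = Dop u φ ∘L ContinuousLinearMap.adjoint (Dop u φ))
    (hconv : Convex ℝ (essRan φ)) :
    minMod (Dop u φ) = essInfAbs φ :=
  le_antisymm (minMod_le u φ) (minMod_ge u φ hconv)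

end DTTO
end
end

section
/- Let u be a nonconstant inner function and let φ ∈ L∞(𝕋) satisfy |φ| = 1 a.e. on 𝕋. Then m(B_φ) = √(1 − ‖A_φ‖²). -/
open MeasureTheory Complex
open scoped InnerProductSpace ENNReal

noncomputable section

namespace DTTO

lemma coeFn_toL2 (φ : Linf) : ⇑(toL2 φ) =ᵐ[μT] ⇑φ :=
  MemLp.coeFn_toLp _

lemma norm_Mmul_of_unimod {ψ : Linf} (h : ∀ᵐ z ∂μT, ‖ψ z‖ = 1)
    (f : L2) : ‖Mmul ψ f‖ = ‖f‖ := by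
  have hae : ⇑(Mmul ψ f) =ᵐ[μT] ⇑ψ • ⇑f := coeFn_Mmul ψ f
  rw [Lp.norm_def, Lp.norm_def, eLpNorm_congr_ae hae,
    eLpNorm_congr_norm_ae (g := ⇑f) ?_]
  filter_upwards [h] with z hz
  simp [Pi.smul_apply', norm_smul, hz]

lemma norm_e0 : ‖(fourierLp 2 (0:ℤ) : L2)‖ = 1 := by
  have hcoe := congrFun (coe_fourierBasis (T := 2 * Real.pi))
  have h := (fourierBasis (T := 2 * Real.pi)).orthonormal.1 0
  simpa only [hcoe] using h

lemma H2_inner_neg_eq_zero {m : ℤ} (hm : m < 0) {v : L2} (hv : v ∈ H2) :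
    (inner ℂ (fourierLp 2 m : L2) v : ℂ) = 0 := by
  have hle : Submodule.span ℂ (Set.range fun n : ℕ => (fourierLp 2 (n : ℤ) : L2))
      ≤ (ℂ ∙ (fourierLp 2 m : L2))ᗮ := by
    rw [Submodule.span_le]
    rintro x ⟨n, rfl⟩
    rw [SetLike.mem_coe, Submodule.mem_orthogonal]
    intro w hw
    obtain ⟨c, rfl⟩ := Submodule.mem_span_singleton.1 hw
    rw [inner_smul_left, inner_fourierLp_eq_zero (by omega : m ≠ (n : ℤ)), mul_zero]
  have hmem := Submodule.topologicalClosure_minimal _ hle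
    (Submodule.isClosed_orthogonal _) hv
  exact (Submodule.mem_orthogonal _ _).1 hmem _ (Submodule.mem_span_singleton_self _)

lemma e0_mem_H2 : (fourierLp 2 (0:ℤ) : L2) ∈ H2 := by
  apply Submodule.le_topologicalClosure
  exact Submodule.subset_span ⟨0, by norm_num⟩

lemma exists_unit_Ku (u : Linf) (hu : IsInnerFn u) (hnc : Nonconst u) :
    ∃ f : Ku u, ‖f‖ = 1 := by
  set c : ℂ := (starRingEnd ℂ) (coef0 u) with hc_def
  set k0 : L2 := (fourierLp 2 (0:ℤ) : L2) - c • toL2 u with hk0_def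
  have hu_coe : ⇑(toL2 u) =ᵐ[μT] ⇑u := coeFn_toL2 u
  have he : ∀ n : ℤ, ⇑(fourierLp 2 n : L2) =ᵐ[μT] ⇑(fourier n) :=
    fun n => coeFn_fourierLp 2 n
  have hconj_mul : ∀ᵐ z ∂μT, (starRingEnd ℂ) (u z) * u z = 1 := by
    filter_upwards [hu.unimod] with z hz
    rw [mul_comm, Complex.mul_conj, Complex.normSq_eq_norm_sq, hz]
    norm_num
  -- T1 : shifting the exponential across
  have T1 : ∀ n : ℤ, (inner ℂ (fourierLp 2 (0:ℤ) : L2) (Mmul u (fourierLp 2 n)) : ℂ)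
      = inner ℂ (fourierLp 2 (-n) : L2) (toL2 u) := by
    intro n
    rw [L2.inner_def, L2.inner_def]
    apply integral_congr_ae
    filter_upwards [he 0, he n, he (-n), hu_coe, coeFn_Mmul u (fourierLp 2 n)] with
      z h0 hn hmn huz hMz
    rw [RCLike.inner_apply, RCLike.inner_apply, h0, hmn, huz, hMz]
    simp only [Pi.smul_apply', smul_eq_mul, hn, fourier_zero, fourier_neg, map_one,
      RingHomCompTriple.comp_apply, RingHom.id_apply, starRingEnd_self_apply]
    ring
  have T2 : ∀ n : ℤ, (inner ℂ (toL2 u) (Mmul u (fourierLp 2 n)) : ℂ)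
      = inner ℂ (fourierLp 2 (0:ℤ) : L2) (fourierLp 2 n : L2) := by
    intro n
    rw [L2.inner_def, L2.inner_def]
    apply integral_congr_ae
    filter_upwards [he 0, he n, hu_coe, coeFn_Mmul u (fourierLp 2 n), hconj_mul] with
      z h0 hn huz hMz hcm
    rw [RCLike.inner_apply, RCLike.inner_apply, huz, hMz, h0]
    simp only [Pi.smul_apply', smul_eq_mul, hn, fourier_zero, map_one, one_mul]
    linear_combination ((fourier n) z) * hcm
  have hc0 : (inner ℂ (fourierLp 2 (0:ℤ) : L2) (toL2 u) : ℂ) = coef0 u := by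
    rw [L2.inner_def]
    unfold coef0 fourierCoeff
    apply integral_congr_ae
    filter_upwards [he 0, hu_coe] with z h0 hz
    rw [RCLike.inner_apply, h0, hz]
    simp [fourier_zero]
  -- the functional
  set F : L2 →L[ℂ] ℂ := (innerSL ℂ k0).comp (Mmul u) with hF_def
  have hFapp : ∀ g : L2, F g = inner ℂ k0 (Mmul u g) := fun g => rfl
  have hgen : ∀ n : ℕ, F (fourierLp 2 (n : ℤ)) = 0 := by
    intro n
    have hcc : (starRingEnd ℂ) c = coef0 u := by
      rw [hc_def, Complex.conj_conj]
    rw [hFapp, hk0_def, inner_sub_left, inner_smul_left, T1, T2, hcc]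
    match n with
    | 0 =>
      simp only [Nat.cast_zero, neg_zero, hc0,
        inner_self_eq_norm_sq_to_K, norm_e0]
      norm_num
    | (m+1) =>
      rw [H2_inner_neg_eq_zero (by omega) hu.memH2,
        inner_fourierLp_eq_zero (by omega : (0:ℤ) ≠ ((m+1 : ℕ) : ℤ))]
      ring
  have hker : H2 ≤ LinearMap.ker (F : L2 →ₗ[ℂ] ℂ) := by
    apply Submodule.topologicalClosure_minimal
    · rw [Submodule.span_le]
      rintro x ⟨n, rfl⟩
      exact LinearMap.mem_ker.2 (hgen n)
    · exact ContinuousLinearMap.isClosed_ker F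
  have hmemH2 : k0 ∈ H2 := by
    exact Submodule.sub_mem _ e0_mem_H2 (Submodule.smul_mem _ _ hu.memH2)
  have hmemOrth : k0 ∈ (uH2 u)ᗮ := by
    rw [Submodule.mem_orthogonal']
    rintro w hw
    obtain ⟨h, hh, rfl⟩ := hw
    exact LinearMap.mem_ker.1 (hker hh)
  have hmem : k0 ∈ Ku u := Submodule.mem_inf.2 ⟨hmemH2, hmemOrth⟩
  have hk0ne : k0 ≠ 0 := by
    intro h
    have he0 : (fourierLp 2 (0:ℤ) : L2) = c • toL2 u := by
      rwa [sub_eq_zero] at h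
    by_cases hc : c = 0
    · rw [hc, zero_smul] at he0
      have hn := norm_e0
      rw [he0, norm_zero] at hn
      norm_num at hn
    · apply hnc
      refine ⟨c⁻¹, ?_⟩
      have h1 : ⇑(fourierLp 2 (0:ℤ) : L2) =ᵐ[μT] ⇑(c • toL2 u) := by rw [he0]
      filter_upwards [h1, Lp.coeFn_smul c (toL2 u), hu_coe, he 0] with z hz hsm hu2 h0
      have hone : (1:ℂ) = c * u z := by
        rw [← fourier_zero (x := z), ← h0, hz, hsm]
        simp [hu2]
      field_simp
      linear_combination -hone
  refine ⟨((‖k0‖ : ℂ))⁻¹ • ⟨k0, hmem⟩, ?_⟩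
  have hk0pos : 0 < ‖k0‖ := norm_pos_iff.2 hk0ne
  rw [norm_smul]
  have : ‖(⟨k0, hmem⟩ : Ku u)‖ = ‖k0‖ := rfl
  rw [this, norm_inv, Complex.norm_real, Real.norm_eq_abs, abs_of_pos hk0pos,
    inv_mul_cancel₀ hk0pos.ne']


lemma pyth_lemma (u φ : Linf) (hmod : ∀ᵐ z ∂μT, ‖φ z‖ = 1) (f : Ku u) :
    ‖f‖ ^ 2 = ‖Aop u φ f‖ ^ 2 + ‖Bop u φ f‖ ^ 2 := by
  have h := Submodule.norm_sq_eq_add_norm_sq_projection (Mmul φ (f : L2)) (Ku u)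
  have hnf : ‖Mmul φ (f : L2)‖ = ‖f‖ := norm_Mmul_of_unimod hmod _
  rw [hnf] at h
  have hA : ‖Aop u φ f‖ = ‖(Submodule.orthogonalProjectionOnto (Ku u)) (Mmul φ (f : L2))‖ := rfl
  have hB : ‖Bop u φ f‖ = ‖(Submodule.orthogonalProjectionOnto (Ku u)ᗮ) (Mmul φ (f : L2))‖ := rfl
  rw [hA, hB]
  exact h

end DTTO

namespace DTTO

set_option maxHeartbeats 2000000 in
set_option synthInstance.maxHeartbeats 400000 in
/-- For unimodular `φ`, `m(B_φ) = √(1 - ‖A_φ‖²)`. -/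
theorem minMod_Bphi_eq_sqrt_one_sub_norm_A (u φ : Linf) (hu : IsInnerFn u)
    (hnc : Nonconst u) (hmod : ∀ᵐ z ∂μT, ‖φ z‖ = 1) :
    minMod (Bop u φ) = Real.sqrt (1 - ‖Aop u φ‖ ^ 2) := by
  haveI : Nonempty ↥(Ku u) := ⟨0⟩
  obtain ⟨f₀, hf₀⟩ := exists_unit_Ku u hu hnc
  haveI : Nonempty {x : Ku u // ‖x‖ = 1} := ⟨⟨f₀, hf₀⟩⟩
  have pyth : ∀ f : Ku u, ‖f‖ ^ 2 = ‖Aop u φ f‖ ^ 2 + ‖Bop u φ f‖ ^ 2 :=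
    pyth_lemma u φ hmod
  have hAle : ∀ f : Ku u, ‖Aop u φ f‖ ≤ ‖f‖ := by
    intro f
    nlinarith [pyth f, norm_nonneg (Aop u φ f), norm_nonneg (Bop u φ f), norm_nonneg f]
  have hBle : ∀ f : Ku u, ‖Bop u φ f‖ ≤ ‖f‖ := by
    intro f
    nlinarith [pyth f, norm_nonneg (Aop u φ f), norm_nonneg (Bop u φ f), norm_nonneg f]
  have hS0 : 0 ≤ ‖Aop u φ‖ := ContinuousLinearMap.opNorm_nonneg _
  have hS1 : ‖Aop u φ‖ ≤ 1 :=
    (Aop u φ).opNorm_le_bound zero_le_one (by simpa using hAle)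
  have hm0 : 0 ≤ minMod (Bop u φ) := Real.iInf_nonneg fun x => norm_nonneg _
  have hbdd : BddBelow (Set.range fun x : {x : Ku u // ‖x‖ = 1} => ‖Bop u φ x.1‖) :=
    ⟨0, by rintro _ ⟨x, rfl⟩; exact norm_nonneg _⟩
  have hmle : ∀ x : {x : Ku u // ‖x‖ = 1}, minMod (Bop u φ) ≤ ‖Bop u φ x.1‖ :=
    fun x => ciInf_le hbdd x
  have hm1 : minMod (Bop u φ) ≤ 1 := by
    have h1 := hmle ⟨f₀, hf₀⟩
    have h2 := hBle f₀
    rw [hf₀] at h2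
    linarith
  refine le_antisymm ?_ ?_
  · -- minMod ≤ √(1 - ‖A‖²) : show ‖A‖ ≤ √(1 - m²) first
    have hmm : (0:ℝ) ≤ 1 - minMod (Bop u φ) ^ 2 := by nlinarith
    have hAt : ‖Aop u φ‖ ≤ Real.sqrt (1 - minMod (Bop u φ) ^ 2) := by
      apply (Aop u φ).opNorm_le_bound (Real.sqrt_nonneg _)
      intro f
      rcases eq_or_ne f 0 with rfl | hf
      · simp
      · have hnf : (0:ℝ) < ‖f‖ := norm_pos_iff.2 hf
        set g : Ku u := ((‖f‖ : ℂ))⁻¹ • f with hg_def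
        have hgn : ‖g‖ = 1 := by
          rw [hg_def, norm_smul, norm_inv, Complex.norm_real, Real.norm_eq_abs,
            abs_of_pos hnf, inv_mul_cancel₀ hnf.ne']
        have hmg : minMod (Bop u φ) ≤ ‖Bop u φ g‖ := hmle ⟨g, hgn⟩
        have hAg : ‖Aop u φ g‖ ≤ Real.sqrt (1 - minMod (Bop u φ) ^ 2) := by
          rw [Real.le_sqrt (norm_nonneg _) hmm]
          nlinarith [pyth g, norm_nonneg (Bop u φ g), hgn]
        have hfg : f = (‖f‖ : ℂ) • g := by
          rw [hg_def, smul_smul, mul_inv_cancel₀ (by exact_mod_cast hnf.ne'), one_smul]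
        calc ‖Aop u φ f‖ = ‖f‖ * ‖Aop u φ g‖ := by
              conv_lhs => rw [hfg]
              rw [_root_.map_smul, norm_smul, Complex.norm_real, Real.norm_eq_abs,
                abs_of_pos hnf]
          _ ≤ ‖f‖ * Real.sqrt (1 - minMod (Bop u φ) ^ 2) :=
              mul_le_mul_of_nonneg_left hAg hnf.le
          _ = Real.sqrt (1 - minMod (Bop u φ) ^ 2) * ‖f‖ := mul_comm _ _
    have hA2 : ‖Aop u φ‖ ^ 2 ≤ 1 - minMod (Bop u φ) ^ 2 := by
      have hs := Real.sq_sqrt hmm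
      nlinarith [Real.sqrt_nonneg (1 - minMod (Bop u φ) ^ 2)]
    rw [Real.le_sqrt hm0 (by nlinarith)]
    linarith
  · -- √(1 - ‖A‖²) ≤ minMod B
    apply le_ciInf
    intro x
    have hx := x.2
    have hAx : ‖Aop u φ x.1‖ ≤ ‖Aop u φ‖ := by
      have h := (Aop u φ).le_opNorm x.1
      rwa [hx, mul_one] at h
    have hBx : 1 - ‖Aop u φ‖ ^ 2 ≤ ‖Bop u φ x.1‖ ^ 2 := by
      have hp := pyth x.1
      rw [hx] at hp
      nlinarith [norm_nonneg (Aop u φ x.1)]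
    calc Real.sqrt (1 - ‖Aop u φ‖ ^ 2) ≤ Real.sqrt (‖Bop u φ x.1‖ ^ 2) :=
          Real.sqrt_le_sqrt hBx
      _ = ‖Bop u φ x.1‖ := by rw [Real.sqrt_sq (norm_nonneg _)]

end DTTO
end
end
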